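/- Let M' be a positive integer, v ∈ ℝ, and let H : ℤ → ℂ be finitely supported. Define ψ : ℝ × ℝ → ℂ by ψ(t, x) = Σ_n H(n) · e^{−2πi t v n} · e^{2πi (x + t v)·Alias_{M'}(n)}. Assume that for every m ∈ ℤ there is at most one n in the support of H with Alias_{M'}(n) = m and n ≠ m. Then for every k the partial derivative ∂ψ/∂t(0, k/M') exists, and (1/M') · Σ_{k=0}^{M'−1} |∂ψ/∂t(0, k/M')|² = (2π)² v² · Σ_n (Alias_{M'}(n) − n)² · |H(n)|². -/

import Mathlib

open Complex Real

/-- The aliasing map: `aliasMap fs n` is the representative of `n` modulo `fs`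
lying in `[-fs/2, fs/2)`. -/
def aliasMap (fs : ℕ) (n : ℤ) : ℤ :=
  if 2 * (n % (fs : ℤ)) < (fs : ℤ) then n % (fs : ℤ) else n % (fs : ℤ) - (fs : ℤ)

/-- `psi M' v H t x`: translate the band-limited signal with Fourier coefficients `H`
by `t·v`, alias each frequency `n` to `aliasMap M' n`, and translate back by `−t·v`
(evaluation at `x + t·v`). -/
noncomputable def psi (M' : ℕ) (v : ℝ) (H : ℤ →₀ ℂ) (t x : ℝ) : ℂ :=
  ∑ n ∈ H.support,
    H n * Complex.exp (-(2 * (π : ℂ) * I * (t : ℂ) * (v : ℂ) * (n : ℂ))) *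
      Complex.exp (2 * (π : ℂ) * I * ((x : ℂ) + (t : ℂ) * (v : ℂ)) * (aliasMap M' n : ℂ))

lemma alias_dvd (fs : ℕ) (n : ℤ) : (fs:ℤ) ∣ (n - aliasMap fs n) := by
  unfold aliasMap
  split
  · simpa using Int.dvd_self_sub_of_emod_eq rfl
  · have h : n - (n % (fs:ℤ) - fs) = (n - n % fs) + fs := by ring
    rw [h]
    exact dvd_add (Int.dvd_self_sub_of_emod_eq rfl) dvd_rfl

lemma alias_eq_of_dvd (fs : ℕ) {n₁ n₂ : ℤ} (h : (fs:ℤ) ∣ n₁ - n₂) :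
    aliasMap fs n₁ = aliasMap fs n₂ := by
  have h2 : n₁ % (fs:ℤ) = n₂ % (fs:ℤ) := Int.ModEq.symm (Int.modEq_iff_dvd.mpr (by simpa using h))
  simp [aliasMap, h2]

lemma sum_exp (M' : ℕ) (hM : 0 < M') (d : ℤ) :
    ∑ k ∈ Finset.range M', Complex.exp (2*(π:ℂ)*I*(k:ℂ)*(d:ℂ)/(M':ℂ)) =
      if (M':ℤ) ∣ d then (M':ℂ) else 0 := by
  have hMne : (M':ℂ) ≠ 0 := Nat.cast_ne_zero.mpr hM.ne'
  have h2pi : (2*(π:ℂ)*I) ≠ 0 := by simp [Real.pi_ne_zero, Complex.I_ne_zero]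
  have hterm : ∀ k : ℕ, Complex.exp (2*(π:ℂ)*I*(k:ℂ)*(d:ℂ)/(M':ℂ)) =
      Complex.exp (2*(π:ℂ)*I*(d:ℂ)/(M':ℂ)) ^ k := by
    intro k
    rw [← Complex.exp_nat_mul]
    ring_nf
  simp only [hterm]
  by_cases hd : (M':ℤ) ∣ d
  · rw [if_pos hd]
    obtain ⟨e, he⟩ := hd
    have h1 : Complex.exp (2*(π:ℂ)*I*(d:ℂ)/(M':ℂ)) = 1 := by
      have he2 : (2*(π:ℂ)*I*(d:ℂ)/(M':ℂ)) = (e:ℂ) * (2*(π:ℂ)*I) := by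
        rw [he]; push_cast; field_simp
      rw [he2, Complex.exp_int_mul_two_pi_mul_I]
    simp [h1]
  · rw [if_neg hd]
    have hr : Complex.exp (2*(π:ℂ)*I*(d:ℂ)/(M':ℂ)) ≠ 1 := by
      intro h1
      rw [Complex.exp_eq_one_iff] at h1
      obtain ⟨m, hm⟩ := h1
      apply hd
      field_simp at hm
      have h3 : (d:ℂ) = (m:ℂ)*(M':ℂ) := mul_left_cancel₀ h2pi (by rw [hm]; ring)
      have h4 : d = m * M' := by exact_mod_cast h3
      exact ⟨m, h4.trans (mul_comm m M')⟩
    have hpow : Complex.exp (2*(π:ℂ)*I*(d:ℂ)/(M':ℂ)) ^ M' = 1 := by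
      rw [← Complex.exp_nat_mul]
      have h5 : (M':ℂ) * (2*(π:ℂ)*I*(d:ℂ)/(M':ℂ)) = (d:ℂ) * (2*(π:ℂ)*I) := by
        field_simp
      rw [h5, Complex.exp_int_mul_two_pi_mul_I]
    rw [geom_sum_eq hr, hpow]
    simp


lemma psi_hasDerivAt (M' : ℕ) (v : ℝ) (H : ℤ →₀ ℂ) (x : ℝ) :
    HasDerivAt (fun t => psi M' v H t x)
      (∑ n ∈ H.support,
        (2*(π:ℂ)*I*(v:ℂ)) * (H n * ((aliasMap M' n - n : ℤ):ℂ)) *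
          Complex.exp (2*(π:ℂ)*I*(x:ℂ)*(aliasMap M' n : ℂ))) 0 := by
  unfold psi
  apply HasDerivAt.fun_sum
  intro n _
  set a : ℤ := aliasMap M' n with ha
  set d : ℂ := 2*(π:ℂ)*I*(v:ℂ)*((a - n : ℤ):ℂ) with hd
  have hfn : (fun t : ℝ => H n * Complex.exp (-(2 * (π : ℂ) * I * (t : ℂ) * (v : ℂ) * (n : ℂ))) *
      Complex.exp (2 * (π : ℂ) * I * ((x : ℂ) + (t : ℂ) * (v : ℂ)) * (a : ℂ)))
      = fun t : ℝ => (H n * Complex.exp (2*(π:ℂ)*I*(x:ℂ)*(a:ℂ))) * Complex.exp ((t:ℂ) * d) := by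
    funext t
    simp only [mul_assoc, ← Complex.exp_add]
    congr 2
    push_cast [hd]
    ring
  rw [hfn]
  have h1 : HasDerivAt (fun t : ℝ => (t:ℂ)) 1 0 := by
    simpa using (hasDerivAt_id (0:ℝ)).ofReal_comp
  have h2 := ((h1.mul_const d).cexp).const_mul (H n * Complex.exp (2*(π:ℂ)*I*(x:ℂ)*(a:ℂ)))
  simp only [Complex.ofReal_zero, zero_mul, Complex.exp_zero, one_mul, mul_one] at h2
  refine h2.congr_deriv ?_
  push_cast [hd]
  ring


/-- Translation equivariance error of aliasing (1d): if each output frequency `m` has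
at most one input frequency `n ≠ m` in the support of `H` aliasing onto it, then the
mean over the sampling grid of the squared modulus of `∂ψ/∂t(0,·)` equals
`(2π)² v² ∑ₙ (aliasMap M' n − n)² |H n|²`. -/
theorem aliasing_translation_equivariance_error
    (M' : ℕ) (hM : 0 < M') (v : ℝ) (H : ℤ →₀ ℂ)
    (hfib : ∀ m : ℤ, ∀ n₁ ∈ H.support, ∀ n₂ ∈ H.support,
      aliasMap M' n₁ = m → n₁ ≠ m → aliasMap M' n₂ = m → n₂ ≠ m → n₁ = n₂) :
    (∀ k : ℕ, DifferentiableAt ℝ (fun t => psi M' v H t ((k : ℝ) / (M' : ℝ))) 0) ∧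
    (1 / (M' : ℝ)) * ∑ k ∈ Finset.range M',
        ‖deriv (fun t => psi M' v H t ((k : ℝ) / (M' : ℝ))) 0‖ ^ 2 =
      (2 * π) ^ 2 * v ^ 2 * ∑ n ∈ H.support,
        ((aliasMap M' n - n : ℤ) : ℝ) ^ 2 * ‖H n‖ ^ 2 := by
  have hMne : (M':ℝ) ≠ 0 := Nat.cast_ne_zero.mpr hM.ne'
  set s := H.support with hs
  set c : ℤ → ℂ := fun n => H n * ((aliasMap M' n - n : ℤ):ℂ) with hc
  set S : ℕ → ℂ := fun k => ∑ n ∈ s, c n *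
      Complex.exp (2*(π:ℂ)*I*(k:ℂ)*(aliasMap M' n : ℂ)/(M':ℂ)) with hS
  -- derivative
  have hder : ∀ k : ℕ, HasDerivAt (fun t => psi M' v H t ((k:ℝ)/(M':ℝ)))
      (2*(π:ℂ)*I*(v:ℂ) * S k) 0 := by
    intro k
    have h := psi_hasDerivAt M' v H ((k:ℝ)/(M':ℝ))
    convert h using 1
    rw [hS, Finset.mul_sum]
    apply Finset.sum_congr rfl
    intro n _
    have he : (2*(π:ℂ)*I*(((k:ℝ)/(M':ℝ) : ℝ):ℂ)*(aliasMap M' n : ℂ))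
        = 2*(π:ℂ)*I*(k:ℂ)*(aliasMap M' n:ℂ)/(M':ℂ) := by
      push_cast
      ring
    rw [he, hc]
    ring
  constructor
  · exact fun k => (hder k).differentiableAt
  -- Parseval
  have hpar : ∑ k ∈ Finset.range M', S k * (starRingEnd ℂ) (S k)
      = (M':ℂ) * ∑ n ∈ s, c n * (starRingEnd ℂ) (c n) := by
    have hexpand : ∀ k ∈ Finset.range M', S k * (starRingEnd ℂ) (S k)
        = ∑ n ∈ s, ∑ n' ∈ s, (c n * (starRingEnd ℂ) (c n')) *
            Complex.exp (2*(π:ℂ)*I*(k:ℂ)*((aliasMap M' n - aliasMap M' n' : ℤ):ℂ)/(M':ℂ)) := by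
      intro k _
      rw [hS, map_sum, Finset.sum_mul_sum]
      apply Finset.sum_congr rfl; intro n _
      apply Finset.sum_congr rfl; intro n' _
      rw [map_mul, ← Complex.exp_conj]
      have hconj : (starRingEnd ℂ) (2*(π:ℂ)*I*(k:ℂ)*(aliasMap M' n' : ℂ)/(M':ℂ))
          = -(2*(π:ℂ)*I*(k:ℂ)*(aliasMap M' n' : ℂ)/(M':ℂ)) := by
        simp [map_mul, map_div₀, Complex.conj_I, Complex.conj_ofReal, map_ofNat]
        ring
      rw [hconj]
      rw [show (c n * Complex.exp (2*(π:ℂ)*I*(k:ℂ)*(aliasMap M' n : ℂ)/(M':ℂ))) *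
          ((starRingEnd ℂ) (c n') * Complex.exp (-(2*(π:ℂ)*I*(k:ℂ)*(aliasMap M' n' : ℂ)/(M':ℂ))))
          = (c n * (starRingEnd ℂ) (c n')) *
            (Complex.exp (2*(π:ℂ)*I*(k:ℂ)*(aliasMap M' n : ℂ)/(M':ℂ)) *
             Complex.exp (-(2*(π:ℂ)*I*(k:ℂ)*(aliasMap M' n' : ℂ)/(M':ℂ)))) from by ring,
        ← Complex.exp_add]
      congr 2
      push_cast
      ring
    rw [Finset.sum_congr rfl hexpand, Finset.sum_comm]
    have hswap : ∀ n ∈ s, ∑ k ∈ Finset.range M', ∑ n' ∈ s,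
        (c n * (starRingEnd ℂ) (c n')) *
          Complex.exp (2*(π:ℂ)*I*(k:ℂ)*((aliasMap M' n - aliasMap M' n' : ℤ):ℂ)/(M':ℂ))
        = ∑ n' ∈ s, (c n * (starRingEnd ℂ) (c n')) *
            (if (M':ℤ) ∣ (aliasMap M' n - aliasMap M' n') then (M':ℂ) else 0) := by
      intro n _
      rw [Finset.sum_comm]
      apply Finset.sum_congr rfl; intro n' _
      rw [← Finset.mul_sum, sum_exp M' hM (aliasMap M' n - aliasMap M' n')]
    rw [Finset.sum_congr rfl hswap]
    have hdiag : ∀ n ∈ s, ∑ n' ∈ s, (c n * (starRingEnd ℂ) (c n')) *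
        (if (M':ℤ) ∣ (aliasMap M' n - aliasMap M' n') then (M':ℂ) else 0)
        = (c n * (starRingEnd ℂ) (c n)) * (M':ℂ) := by
      intro n hn
      rw [Finset.sum_eq_single_of_mem n hn]
      · simp
      · intro n' hn' hne
        by_cases hcn : c n = 0
        · simp [hcn]
        by_cases hcn' : c n' = 0
        · simp [hcn']
        by_cases hdvd : (M':ℤ) ∣ (aliasMap M' n - aliasMap M' n')
        · exfalso
          -- derive n' = n from hfib
          have hann : n ≠ aliasMap M' n := by
            intro hh; apply hcn; simp [hc, ← hh]
          have hann' : n' ≠ aliasMap M' n' := by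
            intro hh; apply hcn'; simp [hc, ← hh]
          have hnn' : (M':ℤ) ∣ (n - n') := by
            have h1 := alias_dvd M' n
            have h2 := alias_dvd M' n'
            have : n - n' = (n - aliasMap M' n) - (n' - aliasMap M' n')
                + (aliasMap M' n - aliasMap M' n') := by ring
            rw [this]
            exact dvd_add (dvd_sub h1 h2) hdvd
          have haa : aliasMap M' n = aliasMap M' n' := alias_eq_of_dvd M' hnn'
          exact hne (hfib (aliasMap M' n) n hn n' hn' rfl hann haa.symm (haa ▸ hann')).symm
        · simp [hdvd]
    rw [Finset.sum_congr rfl hdiag, ← Finset.sum_mul]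
    ring
  -- convert to real
  have hreal : ∑ k ∈ Finset.range M', ‖S k‖^2 = (M':ℝ) * ∑ n ∈ s, ‖c n‖^2 := by
    have : ((∑ k ∈ Finset.range M', ‖S k‖^2 : ℝ) : ℂ)
        = (((M':ℝ) * ∑ n ∈ s, ‖c n‖^2 : ℝ) : ℂ) := by
      push_cast
      simpa [Complex.mul_conj'] using hpar
    exact_mod_cast this
  -- finish
  have hderiv_eq : ∀ k : ℕ, deriv (fun t => psi M' v H t ((k:ℝ)/(M':ℝ))) 0
      = 2*(π:ℂ)*I*(v:ℂ) * S k := fun k => (hder k).deriv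
  have hnormsq : ∀ k : ℕ, ‖(2*(π:ℂ)*I*(v:ℂ)) * S k‖^2 = (2*π)^2 * v^2 * ‖S k‖^2 := by
    intro k
    rw [norm_mul, mul_pow]
    congr 1
    have : ‖(2*(π:ℂ)*I*(v:ℂ))‖ = 2*π*|v| := by
      simp [norm_mul, Complex.norm_I, Complex.norm_real, Real.norm_eq_abs,
        abs_of_pos Real.pi_pos]
    rw [this]
    rw [mul_pow, mul_pow, _root_.sq_abs]
  have hcnorm : ∀ n ∈ s, ‖c n‖^2 = ((aliasMap M' n - n : ℤ) : ℝ)^2 * ‖H n‖^2 := by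
    intro n _
    rw [hc]
    simp only [norm_mul, mul_pow, Complex.norm_intCast, _root_.sq_abs]
    ring
  calc (1 / (M' : ℝ)) * ∑ k ∈ Finset.range M',
        ‖deriv (fun t => psi M' v H t ((k : ℝ) / (M' : ℝ))) 0‖ ^ 2
      = (1 / (M' : ℝ)) * ∑ k ∈ Finset.range M', (2*π)^2 * v^2 * ‖S k‖^2 := by
        congr 1
        apply Finset.sum_congr rfl
        intro k _
        rw [hderiv_eq k, hnormsq k]
    _ = (1 / (M' : ℝ)) * ((2*π)^2 * v^2 * ((M':ℝ) * ∑ n ∈ s, ‖c n‖^2)) := by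
        rw [← Finset.mul_sum, hreal]
    _ = (2*π)^2 * v^2 * ∑ n ∈ s, ‖c n‖^2 := by
        field_simp
    _ = (2 * π) ^ 2 * v ^ 2 * ∑ n ∈ s, ((aliasMap M' n - n : ℤ) : ℝ) ^ 2 * ‖H n‖ ^ 2 := by
        rw [Finset.sum_congr rfl hcnorm]
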